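/- Let M, N be positive integers, ρ > 0, and let X̂ be a real M×N matrix. Define the matrix X* column-by-column by X*_{:,n} = max(0, 1 − 1/(ρ ‖X̂_{:,n}‖₂)) • X̂_{:,n} when X̂_{:,n} ≠ 0 and X*_{:,n} = 0 when X̂_{:,n} = 0. Then X* minimizes the function X ↦ ‖X‖_{2,1} + (ρ/2) ‖X − X̂‖_F² over all real M×N matrices X. -/

import Mathlib

/-- The Euclidean norm of the n-th column of a real M×N matrix. -/
noncomputable def colNorm {M N : ℕ} (Z : Matrix (Fin M) (Fin N) ℝ) (n : Fin N) : ℝ :=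
  Real.sqrt (∑ i : Fin M, (Z i n) ^ 2)

/-- The ℓ_{2,1} norm of a real M×N matrix: the sum of the Euclidean
norms of its columns. -/
noncomputable def l21Norm {M N : ℕ} (Z : Matrix (Fin M) (Fin N) ℝ) : ℝ :=
  ∑ n : Fin N, colNorm Z n

/-- The Frobenius norm of a real M×N matrix. -/
noncomputable def frobNorm {M N : ℕ} (A : Matrix (Fin M) (Fin N) ℝ) : ℝ :=
  Real.sqrt (∑ i : Fin M, ∑ j : Fin N, (A i j) ^ 2)

open RealInnerProductSpace

private lemma prox_opt {M : ℕ} (ρ : ℝ) (hρ : 0 < ρ) (v x u : EuclideanSpace ℝ (Fin M))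
    (hs : ‖ρ • (v - x)‖ ≤ 1) (hsx : ⟪ρ • (v - x), x⟫ = ‖x‖) :
    ‖x‖ + ρ / 2 * ‖x - v‖ ^ 2 ≤ ‖u‖ + ρ / 2 * ‖u - v‖ ^ 2 := by
  have e1 : ‖x - v‖ ^ 2 = ‖x‖ ^ 2 - 2 * ⟪x, v⟫ + ‖v‖ ^ 2 := norm_sub_sq_real x v
  have e2 : ‖u - v‖ ^ 2 = ‖u‖ ^ 2 - 2 * ⟪u, v⟫ + ‖v‖ ^ 2 := norm_sub_sq_real u v
  have e3 : ‖u - x‖ ^ 2 = ‖u‖ ^ 2 - 2 * ⟪u, x⟫ + ‖x‖ ^ 2 := norm_sub_sq_real u x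
  have h3 : (0:ℝ) ≤ ‖u - x‖ ^ 2 := sq_nonneg _
  have hsx' : ρ * (⟪v, x⟫ - ⟪x, x⟫) = ‖x‖ := by
    rw [real_inner_smul_left, inner_sub_left] at hsx; exact hsx
  have hxx : ⟪x, x⟫ = ‖x‖ ^ 2 := real_inner_self_eq_norm_sq x
  have hcs : ⟪ρ • (v - x), u⟫ ≤ ‖ρ • (v - x)‖ * ‖u‖ := real_inner_le_norm _ _
  have h1 : ρ * (⟪v, u⟫ - ⟪x, u⟫) ≤ ‖u‖ := by
    rw [real_inner_smul_left, inner_sub_left] at hcs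
    have : ‖ρ • (v - x)‖ * ‖u‖ ≤ 1 * ‖u‖ :=
      mul_le_mul_of_nonneg_right hs (norm_nonneg u)
    linarith
  have c1 : ⟪x, v⟫ = ⟪v, x⟫ := real_inner_comm v x
  have c2 : ⟪u, v⟫ = ⟪v, u⟫ := real_inner_comm v u
  have c3 : ⟪u, x⟫ = ⟪x, u⟫ := real_inner_comm x u
  nlinarith [hρ.le, mul_nonneg hρ.le h3]

private lemma prox_col {M : ℕ} (ρ : ℝ) (hρ : 0 < ρ) (v u : EuclideanSpace ℝ (Fin M)) :
    ‖(max 0 (1 - 1 / (ρ * ‖v‖))) • v‖ + ρ / 2 * ‖(max 0 (1 - 1 / (ρ * ‖v‖))) • v - v‖ ^ 2 ≤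
      ‖u‖ + ρ / 2 * ‖u - v‖ ^ 2 := by
  set c : ℝ := max 0 (1 - 1 / (ρ * ‖v‖)) with hc
  have hc0 : 0 ≤ c := le_max_left _ _
  set x : EuclideanSpace ℝ (Fin M) := c • v with hx
  have hvx : v - x = (1 - c) • v := by rw [hx, sub_smul, one_smul]
  have hs' : ρ • (v - x) = (ρ * (1 - c)) • v := by rw [hvx, smul_smul]
  have hnormx : ‖x‖ = c * ‖v‖ := by
    rw [hx, norm_smul, Real.norm_eq_abs, abs_of_nonneg hc0]
  have hsxgen : ⟪ρ • (v - x), x⟫ = ρ * (1 - c) * c * ‖v‖ ^ 2 := by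
    rw [hs', hx, real_inner_smul_left, real_inner_smul_right, real_inner_self_eq_norm_sq]
    ring
  rcases eq_or_ne v 0 with hv | hv
  · have hx0 : x = 0 := by rw [hx, hv, smul_zero]
    refine prox_opt ρ hρ v x u ?_ ?_
    · rw [hx0, hv]; simp
    · rw [hx0, hv]; simp
  · have hvpos : 0 < ‖v‖ := norm_pos_iff.mpr hv
    rcases le_or_gt (ρ * ‖v‖) 1 with hle | hgt
    · have hc' : c = 0 := by
        rw [hc]
        have h2 : 0 < ρ * ‖v‖ := mul_pos hρ hvpos
        have : 1 ≤ 1 / (ρ * ‖v‖) := (le_div_iff₀ h2).mpr (by linarith)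
        exact max_eq_left (by linarith)
      refine prox_opt ρ hρ v x u ?_ ?_
      · rw [hs', hc', norm_smul, Real.norm_eq_abs]
        rw [abs_of_nonneg (by positivity : (0:ℝ) ≤ ρ * (1 - 0))]
        simpa using hle
      · rw [hsxgen, hnormx, hc']; ring
    · have h2 : 0 < ρ * ‖v‖ := mul_pos hρ hvpos
      have hcpos : 0 < 1 - 1 / (ρ * ‖v‖) := by
        have : 1 / (ρ * ‖v‖) < 1 := (div_lt_one h2).mpr hgt
        linarith
      have hc' : c = 1 - 1 / (ρ * ‖v‖) := max_eq_right hcpos.le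
      have key : ρ * (1 - c) * ‖v‖ = 1 := by rw [hc']; field_simp; ring
      refine prox_opt ρ hρ v x u ?_ ?_
      · rw [hs', norm_smul, Real.norm_eq_abs]
        have h1c : 0 ≤ 1 - c := by
          rw [hc']; have : 0 < 1 / (ρ * ‖v‖) := by positivity
          linarith
        rw [abs_of_nonneg (mul_nonneg hρ.le h1c), key]
      · rw [hsxgen, hnormx, pow_two]
        nlinarith [key]

/-- The n-th column of a matrix as a vector in Euclidean space. -/
noncomputable def colVec {M N : ℕ} (Z : Matrix (Fin M) (Fin N) ℝ) (n : Fin N) :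
    EuclideanSpace ℝ (Fin M) :=
  (WithLp.equiv 2 (Fin M → ℝ)).symm (fun i => Z i n)

private lemma colVec_apply {M N : ℕ} (Z : Matrix (Fin M) (Fin N) ℝ) (n : Fin N) (i : Fin M) :
    colVec Z n i = Z i n := rfl

private lemma colNorm_eq {M N : ℕ} (Z : Matrix (Fin M) (Fin N) ℝ) (n : Fin N) :
    colNorm Z n = ‖colVec Z n‖ := by
  rw [EuclideanSpace.norm_eq, colNorm]
  congr 1
  refine Finset.sum_congr rfl fun i _ => ?_
  rw [colVec_apply, Real.norm_eq_abs, sq_abs]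

private lemma colVec_sub {M N : ℕ} (A B : Matrix (Fin M) (Fin N) ℝ) (n : Fin N) :
    colVec (A - B) n = colVec A n - colVec B n := by
  ext i
  simp [colVec_apply, Matrix.sub_apply]

private lemma frob_sq {M N : ℕ} (A : Matrix (Fin M) (Fin N) ℝ) :
    (frobNorm A) ^ 2 = ∑ n : Fin N, (colNorm A n) ^ 2 := by
  rw [frobNorm, Real.sq_sqrt (by positivity)]
  rw [Finset.sum_comm]
  refine Finset.sum_congr rfl fun n _ => ?_
  rw [colNorm, Real.sq_sqrt (by positivity)]

/-- Columnwise block soft-thresholding solves the proximal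
problem `min_X ‖X‖_{2,1} + (ρ/2) ‖X − X̂‖_F²`. -/
theorem stmt_4 (M N : ℕ) (hM : 0 < M) (hN : 0 < N) (ρ : ℝ) (hρ : 0 < ρ)
    (Xhat Xstar : Matrix (Fin M) (Fin N) ℝ)
    (hpos : ∀ n : Fin N, (∃ i, Xhat i n ≠ 0) →
      ∀ i, Xstar i n = max 0 (1 - 1 / (ρ * colNorm Xhat n)) * Xhat i n)
    (hzero : ∀ n : Fin N, (∀ i, Xhat i n = 0) → ∀ i, Xstar i n = 0) :
    ∀ X : Matrix (Fin M) (Fin N) ℝ,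
      l21Norm Xstar + ρ / 2 * (frobNorm (Xstar - Xhat)) ^ 2 ≤
        l21Norm X + ρ / 2 * (frobNorm (X - Xhat)) ^ 2 := by
  intro X
  have hstar : ∀ n : Fin N,
      colVec Xstar n = (max 0 (1 - 1 / (ρ * ‖colVec Xhat n‖))) • colVec Xhat n := by
    intro n
    by_cases h : ∃ i, Xhat i n ≠ 0
    · ext i
      have := hpos n h i
      rw [colNorm_eq] at this
      simpa [colVec_apply] using this
    · push_neg at h
      ext i
      have h1 : Xstar i n = 0 := hzero n h i
      have h2 : Xhat i n = 0 := h i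
      simp [colVec_apply, h1, h2]
  have key : ∀ n : Fin N,
      colNorm Xstar n + ρ / 2 * (colNorm (Xstar - Xhat) n) ^ 2 ≤
        colNorm X n + ρ / 2 * (colNorm (X - Xhat) n) ^ 2 := by
    intro n
    rw [colNorm_eq, colNorm_eq, colNorm_eq, colNorm_eq, colVec_sub, colVec_sub, hstar n]
    exact prox_col ρ hρ (colVec Xhat n) (colVec X n)
  rw [l21Norm, l21Norm, frob_sq, frob_sq, Finset.mul_sum, Finset.mul_sum,
    ← Finset.sum_add_distrib, ← Finset.sum_add_distrib]
  exact Finset.sum_le_sum fun n _ => key n
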